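/- arXiv:2206.08507 — 2 statements merged into one kernel-verified Lean document; each statement's English description precedes it below -/
import Mathlib

section
/- Let s = a + ib ∈ ℂ with a > 0 and b ∈ ℝ, let d ≥ 0 be a real number, and set S = 1 + d/s. Then Re( conj(sS)/S ) = a + k, where k = 2 d b² / |sS|² ≥ 0. (Note that sS = s + d, so |sS|² = (a+d)² + b².) -/
/-- For `s = a + ib` with `a > 0`, `d ≥ 0` and `S = 1 + d/s`, one has
`Re(conj(sS)/S) = a + k` where `k = 2 d b² / |sS|² ≥ 0`. -/
theorem pml_stretching_re_conj_sS_div_S (a b d : ℝ) (ha : 0 < a) (hd : 0 ≤ d)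
    (s S : ℂ) (hs : s = (a : ℂ) + (b : ℂ) * Complex.I) (hS : S = 1 + (d : ℂ) / s) :
    ((starRingEnd ℂ) (s * S) / S).re = a + 2 * d * b ^ 2 / ‖s * S‖ ^ 2 ∧
    0 ≤ 2 * d * b ^ 2 / ‖s * S‖ ^ 2 := by
  have hsre : s.re = a := by simp [hs]
  have hsim : s.im = b := by simp [hs]
  have hs0 : s ≠ 0 := fun h => by simp [h, hsre] at hsre ⊢; nlinarith [hsre]
  have hSS : s * S = s + d := by rw [hS]; field_simp
  have hden : (a + d)^2 + b^2 > 0 := by positivity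
  have habs : ‖s * S‖^2 = (a + d)^2 + b^2 := by
    rw [hSS, ← Complex.normSq_eq_norm_sq]
    simp [Complex.normSq_apply, hsre, hsim]; ring
  constructor
  · have hsd0 : s + (d:ℂ) ≠ 0 := by
      intro h
      have := congrArg Complex.re h
      simp [hsre] at this
      linarith
    have hS0 : S ≠ 0 := by
      intro h
      rw [h, mul_zero] at hSS
      exact hsd0 hSS.symm
    have key : ((starRingEnd ℂ) (s * S) / S) = s * (starRingEnd ℂ) (s + d) / (s + d) := by
      rw [hSS, hS]
      field_simp
    rw [key, habs, Complex.div_re]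
    simp [Complex.normSq_apply, Complex.mul_re, Complex.mul_im, hsre, hsim]
    have hne : a * d * 2 + a ^ 2 + d ^ 2 + b ^ 2 > 0 := by nlinarith
    ring_nf
    have hmul : (a * d * 2 + a ^ 2 + d ^ 2 + b ^ 2) * (a * d * 2 + a ^ 2 + d ^ 2 + b ^ 2)⁻¹ = 1 :=
      mul_inv_cancel₀ hne.ne'
    linear_combination a * hmul
  · positivity
end

section
/- Let s = a + ib ∈ ℂ with a > 0 and b ∈ ℝ, let d ≥ 0 be a real number, and set S = 1 + d/s. Then Re( conj(s) / S² ) = ( a + 2 d b² / ((a+d)² + b²) ) / |S|²; in particular Re( conj(s)/S² ) > 0. -/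
/-- For `s = a + ib` with `a > 0`, `d ≥ 0` and `S = 1 + d/s`,
`Re(conj(s)/S²) = (a + 2 d b²/((a+d)² + b²)) / |S|² > 0`. -/
theorem pml_ellipticity (a b d : ℝ) (ha : 0 < a) (hd : 0 ≤ d)
    (s S : ℂ) (hs : s = (a : ℂ) + (b : ℂ) * Complex.I) (hS : S = 1 + (d : ℂ) / s) :
    ((starRingEnd ℂ) s / S ^ 2).re =
      (a + 2 * d * b ^ 2 / ((a + d) ^ 2 + b ^ 2)) / ‖S‖ ^ 2 ∧
    0 < ((starRingEnd ℂ) s / S ^ 2).re := by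
  have hab : a ^ 2 + b ^ 2 ≠ 0 := by positivity
  have hadb : (a + d) ^ 2 + b ^ 2 ≠ 0 := by positivity
  have hs0 : s ≠ 0 := by
    simp [hs, Complex.ext_iff]
    intro h; exact absurd h ha.ne'
  have hsd : s + d ≠ 0 := by
    simp [hs, Complex.ext_iff]
    intro h
    nlinarith [(show (a:ℝ) + d > 0 by linarith)]
  have hS' : S = (s + d) / s := by
    rw [hS]; field_simp
  have key : (starRingEnd ℂ) s / S ^ 2 = ((starRingEnd ℂ) s * (s * s)) / ((s + d) * (s + d)) := by
    rw [hS']; field_simp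
  have habs : ‖S‖ ^ 2 = ((a + d) ^ 2 + b ^ 2) / (a ^ 2 + b ^ 2) := by
    rw [hS', norm_div, div_pow, Complex.sq_norm, Complex.sq_norm, hs]
    simp [Complex.normSq_apply]
    ring_nf
  have heq : ((starRingEnd ℂ) s / S ^ 2).re =
      (a + 2 * d * b ^ 2 / ((a + d) ^ 2 + b ^ 2)) / ‖S‖ ^ 2 := by
    have hdenre : ((s + (d:ℂ)) * (s + (d:ℂ))).re = (a + d) ^ 2 - b ^ 2 := by
      simp [hs, Complex.mul_re]; ring
    have hdenim : ((s + (d:ℂ)) * (s + (d:ℂ))).im = 2 * (a + d) * b := by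
      simp [hs, Complex.mul_im]; ring
    have hnumre : ((starRingEnd ℂ) s * (s * s)).re = (a ^ 2 + b ^ 2) * a := by
      simp [hs, Complex.mul_re, Complex.mul_im]; ring
    have hnumim : ((starRingEnd ℂ) s * (s * s)).im = (a ^ 2 + b ^ 2) * b := by
      simp [hs, Complex.mul_re, Complex.mul_im]; ring
    have hD : ((a + d) ^ 2 - b ^ 2) * ((a + d) ^ 2 - b ^ 2) + 2 * (a + d) * b * (2 * (a + d) * b)
        = ((a + d) ^ 2 + b ^ 2) ^ 2 := by ring
    rw [key, habs, Complex.div_re, Complex.normSq_apply, hdenre, hdenim, hnumre, hnumim, hD]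
    field_simp
    ring
  refine ⟨heq, heq ▸ ?_⟩
  have h1 : 0 < a + 2 * d * b ^ 2 / ((a + d) ^ 2 + b ^ 2) := by positivity
  have h2 : 0 < ‖S‖ ^ 2 := by
    have : S ≠ 0 := by rw [hS']; exact div_ne_zero hsd hs0
    exact pow_pos (norm_pos_iff.mpr this) 2
  exact div_pos h1 h2
end
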